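/- arXiv:1107.5638 — 4 statements merged into one kernel-verified Lean document; each statement's English description precedes it below -/
import Mathlib

section
/- Let K be a strong solution to the LTS control problem (S, I, G) with G ⊆ I. Then every infinite run in the closed loop system S^(K) starting from a state in I visits G infinitely often. -/
open scoped Classical


/-- A fullpath of a transition relation `R`: a run that is either infinite
(`len = ⊤`) or ends in a state with no successors. States are indexed `0..len`. -/
structure FullPath {S : Type*} {A : Type*} (R : S → A → S → Prop) where
  len : ℕ∞
  st : ℕ → S
  ac : ℕ → A
  step : ∀ t : ℕ, (t : ℕ∞) < len → R (st t) (ac t) (st (t + 1))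
  maximal : ∀ t : ℕ, (t : ℕ∞) = len → ∀ a s', ¬ R (st t) a s'

/-- `J(S,G,π)`: distance along `π` of its first state to the goal `G`
(`min {n > 0 | π(n) ∈ G}`, `⊤` if no such `n`). -/
noncomputable def pathJ {S A : Type*} {R : S → A → S → Prop} (G : Set S)
    (π : FullPath R) : ℕ∞ :=
  sInf {n : ℕ∞ | ∃ m : ℕ, n = (m : ℕ∞) ∧ 0 < m ∧ (m : ℕ∞) ≤ π.len ∧ π.st m ∈ G}

/-- `π` is a fullpath starting in state `s` with action `a`. -/
def PathStarts {S A : Type*} {R : S → A → S → Prop} (π : FullPath R) (s : S) (a : A) : Prop :=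
  π.st 0 = s ∧ π.ac 0 = a ∧ 0 < π.len

/-- Worst case distance of `s` from the goal region `G` (pessimistic view). -/
noncomputable def Jstrong {S A : Type*} (R : S → A → S → Prop) (G : Set S) (s : S) : ℕ∞ :=
  ⨆ (a : A) (_ : ∃ s', R s a s') (π : FullPath R) (_ : PathStarts π s a), pathJ G π

/-- Best case distance of `s` from the goal region `G` (optimistic view). -/
noncomputable def Jweak {S A : Type*} (R : S → A → S → Prop) (G : Set S) (s : S) : ℕ∞ :=
  ⨆ (a : A) (_ : ∃ s', R s a s'), ⨅ (π : FullPath R) (_ : PathStarts π s a), pathJ G π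

/-- A controller only enables admissible actions. -/
def IsController {S A : Type*} (R : S → A → S → Prop) (K : S → A → Prop) : Prop :=
  ∀ s a, K s a → ∃ s', R s a s'

/-- The set of states on which a controller enables some action. -/
def CtrlDom {S A : Type*} (K : S → A → Prop) : Set S := {s | ∃ a, K s a}

/-- The closed loop transition relation `T⁽ᴷ⁾(s,a,s') = T(s,a,s') ∧ K(s,a)`. -/
def closedLoop {S A : Type*} (R : S → A → S → Prop) (K : S → A → Prop) :
    S → A → S → Prop :=
  fun s a s' => R s a s' ∧ K s a

/-- `K` is a strong solution to the LTS control problem `(R, I, G)`. -/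
def StrongSolution {S A : Type*} (R : S → A → S → Prop) (I G : Set S)
    (K : S → A → Prop) : Prop :=
  IsController R K ∧ I ⊆ CtrlDom K ∧ ∀ s ∈ CtrlDom K, Jstrong (closedLoop R K) G s < ⊤

/-- `K` is a weak solution to the LTS control problem `(R, I, G)`. -/
def WeakSolution {S A : Type*} (R : S → A → S → Prop) (I G : Set S)
    (K : S → A → Prop) : Prop :=
  IsController R K ∧ I ⊆ CtrlDom K ∧ ∀ s ∈ CtrlDom K, Jweak (closedLoop R K) G s < ⊤

def OptimalStrong {S A : Type*} (R : S → A → S → Prop) (I G : Set S)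
    (K : S → A → Prop) : Prop :=
  StrongSolution R I G K ∧
    ∀ K', StrongSolution R I G K' →
      ∀ s, Jstrong (closedLoop R K) G s ≤ Jstrong (closedLoop R K') G s

/-- Most general optimal strong solution. -/
def StrongMgo {S A : Type*} (R : S → A → S → Prop) (I G : Set S)
    (K : S → A → Prop) : Prop :=
  OptimalStrong R I G K ∧ ∀ K', OptimalStrong R I G K' → ∀ s a, K' s a → K s a

def OptimalWeak {S A : Type*} (R : S → A → S → Prop) (I G : Set S)
    (K : S → A → Prop) : Prop :=
  WeakSolution R I G K ∧
    ∀ K', WeakSolution R I G K' →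
      ∀ s, Jweak (closedLoop R K) G s ≤ Jweak (closedLoop R K') G s

/-- Most general optimal weak solution. -/
def WeakMgo {S A : Type*} (R : S → A → S → Prop) (I G : Set S)
    (K : S → A → Prop) : Prop :=
  OptimalWeak R I G K ∧ ∀ K', OptimalWeak R I G K' → ∀ s a, K' s a → K s a

/-- If `K` is a strong solution to `(S, I, G)` with `G ⊆ I`, then every
infinite run of the closed loop system starting in `I` visits `G`
infinitely often. -/
theorem closedLoop_visits_goal_infinitely_often {S A : Type*}
    (T : S → A → S → Prop) (I G : Set S) (K : S → A → Prop)
    (hK : StrongSolution T I G K) (hGI : G ⊆ I)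
    (σ : ℕ → S) (α : ℕ → A)
    (hrun : ∀ t, closedLoop T K (σ t) (α t) (σ (t + 1)))
    (h0 : σ 0 ∈ I) :
    ∀ n, ∃ m, n ≤ m ∧ σ m ∈ G := by
  intro n
  obtain ⟨hctrl, hI, hJ⟩ := hK
  -- the shifted infinite run as a full path of the closed loop
  set π : FullPath (closedLoop T K) :=
    { len := ⊤
      st := fun k => σ (n + k)
      ac := fun k => α (n + k)
      step := fun t _ => by simpa [Nat.add_assoc] using hrun (n + t)
      maximal := fun t ht => by simp at ht } with hπ
  have hdom : σ n ∈ CtrlDom K := ⟨α n, (hrun n).2⟩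
  have hstarts : PathStarts π (σ n) (α n) := by
    refine ⟨by simp [hπ], by simp [hπ], ?_⟩
    simp [hπ]
  have hle : pathJ G π ≤ Jstrong (closedLoop T K) G (σ n) := by
    rw [Jstrong]
    exact le_iSup_of_le (α n) (le_iSup_of_le ⟨_, hrun n⟩
      (le_iSup_of_le π (le_iSup_of_le hstarts le_rfl)))
  have hlt : pathJ G π < ⊤ := lt_of_le_of_lt hle (hJ _ hdom)
  rw [pathJ, sInf_lt_iff] at hlt
  obtain ⟨x, ⟨m, rfl, hm0, -, hmG⟩, -⟩ := hlt
  exact ⟨n + m, Nat.le_add_right _ _, hmG⟩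
end

section
/- (Correctness of the gradient-based self-loop elimination.) Let H = (X,U,Y,N) be a DTLHS with quantization Q = (A,Γ). Suppose there exists a real state variable x_j and a bound w_j > 0 such that for every concrete transition (x,u,x') with Γ(x) = x̂, Γ(u) = û, Γ(x') = x̂ one has x'_j − x_j ≥ w_j. Then the abstract self loop (x̂, û, x̂) is eliminable: there is no infinite run x_0 u_0 x_1 u_1 … with Γ(x_t) = x̂ and Γ(u_t) = û for all t. The symmetric statement holds when x'_j − x_j ≤ W_j < 0 for all such transitions. -/
open scoped Classical

lemma no_unbounded_run (w M : ℝ) (hw : 0 < w) (f : ℕ → ℝ)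
    (hstep : ∀ t, w ≤ f (t + 1) - f t) (hbd : ∀ t, |f t - f 0| ≤ M) : False := by
  have key : ∀ t : ℕ, (t : ℝ) * w ≤ f t - f 0 := by
    intro t
    induction t with
    | zero => simp
    | succ k ih =>
      have := hstep k
      push_cast
      nlinarith
  obtain ⟨t, ht⟩ := exists_nat_gt (M / w)
  have h1 := key t
  have h2 := (abs_le.mp (hbd t)).2
  have : M < (t : ℝ) * w := by
    calc M = (M / w) * w := by field_simp
    _ < (t : ℝ) * w := by exact mul_lt_mul_of_pos_right ht hw
  linarith

/-- Correctness of the gradient based self loop elimination: if some real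
state coordinate `j` strictly increases by at least `w > 0` (resp. strictly
decreases by at least `|W|`, `W < 0`) along every concrete transition staying
in the abstract state `xh` under the abstract action `uh`, then the abstract
self loop `(xh, uh, xh)` is eliminable: no infinite concrete run stays in
`Γ⁻¹(xh)` with all actions in `Γ⁻¹(uh)`. -/
theorem selfLoop_eliminable {n : ℕ} {U Xh Uh : Type*}
    (N : (Fin n → ℝ) → U → (Fin n → ℝ) → Prop)
    (Gx : (Fin n → ℝ) → Xh) (Gu : U → Uh)
    (xh : Xh) (uh : Uh) (j : Fin n) (M : ℝ)
    -- the quantization step of the j-th quantization function is finite: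
    (hstep : ∀ x x', Gx x = xh → Gx x' = xh → |x j - x' j| ≤ M) :
    ((∃ w : ℝ, 0 < w ∧ ∀ x u x', N x u x' → Gx x = xh → Gu u = uh → Gx x' = xh →
        w ≤ x' j - x j) →
      ¬ ∃ (σ : ℕ → (Fin n → ℝ)) (α : ℕ → U),
          (∀ t, N (σ t) (α t) (σ (t + 1))) ∧
          ∀ t, Gx (σ t) = xh ∧ Gu (α t) = uh) ∧
    ((∃ W : ℝ, W < 0 ∧ ∀ x u x', N x u x' → Gx x = xh → Gu u = uh → Gx x' = xh →
        x' j - x j ≤ W) →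
      ¬ ∃ (σ : ℕ → (Fin n → ℝ)) (α : ℕ → U),
          (∀ t, N (σ t) (α t) (σ (t + 1))) ∧
          ∀ t, Gx (σ t) = xh ∧ Gu (α t) = uh) := by
  constructor
  · rintro ⟨w, hw, hmono⟩ ⟨σ, α, hN, hG⟩
    exact no_unbounded_run w M hw (fun t => σ t j)
      (fun t => hmono _ _ _ (hN t) (hG t).1 (hG t).2 (hG (t + 1)).1)
      (fun t => hstep _ _ (hG t).1 (hG 0).1)
  · rintro ⟨W, hW, hmono⟩ ⟨σ, α, hN, hG⟩
    refine no_unbounded_run (-W) M (by linarith) (fun t => -(σ t j))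
      (fun t => by have := hmono _ _ _ (hN t) (hG t).1 (hG t).2 (hG (t + 1)).1
                   show -W ≤ -(σ (t+1) j) - -(σ t j); linarith)
      (fun t => by rw [show -σ t j - -σ 0 j = -(σ t j - σ 0 j) by ring, abs_neg]
                   exact hstep _ _ (hG t).1 (hG 0).1)
end

section
/- For the three-state LTS S1 with states {−1, 0, 1}, actions {0, 1}, and transitions {(−1,0,0), (−1,0,−1), (−1,1,−1), (0,0,0), (0,1,0), (0,1,1), (0,1,−1), (1,0,0), (1,0,1), (1,1,1)}, the control problem (S1, {−1,0,1}, {0}) has no strong solution, but the controller K(s,a) = (s ≠ 0 → a = 0) is a weak solution to it. -/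
open scoped Classical


/-- The states of the LTS `S1`. -/
def St := {s : ℤ // s = -1 ∨ s = 0 ∨ s = 1}

/-- The transition relation of the LTS `S1` (action `0` is `false`,
action `1` is `true`). -/
def T1 : St → Bool → St → Prop :=
  fun s a s' => (s.val, a, s'.val) ∈
    ({(-1, false, 0), (-1, false, -1), (-1, true, -1),
      (0, false, 0), (0, true, 0), (0, true, 1), (0, true, -1),
      (1, false, 0), (1, false, 1), (1, true, 1)} : Set (ℤ × Bool × ℤ))

/-- The control problem `(S1, {-1,0,1}, {0})` has no strong solution, but the
controller `K(s,a) = (s ≠ 0 → a = 0)` is a weak solution to it. -/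
theorem S1_no_strong_but_weak :
    (¬ ∃ K : St → Bool → Prop,
        StrongSolution T1 Set.univ {s : St | s.val = 0} K) ∧
    WeakSolution T1 Set.univ {s : St | s.val = 0}
      (fun s a => s.val ≠ 0 → a = false) := by

  constructor
  · rintro ⟨K, hctrl, hdom, hJ⟩
    set p1 : St := ⟨1, Or.inr (Or.inr rfl)⟩ with hp1
    obtain ⟨a, hKa⟩ := hdom (Set.mem_univ p1)
    have hT : T1 p1 a p1 := by cases a <;> simp [T1, hp1]
    have hcl : closedLoop T1 K p1 a p1 := ⟨hT, hKa⟩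
    set π : FullPath (closedLoop T1 K) :=
      { len := ⊤, st := fun _ => p1, ac := fun _ => a,
        step := fun t _ => hcl,
        maximal := fun t ht => absurd ht (by simp) } with hπ
    have hstart : PathStarts π p1 a := ⟨rfl, rfl, by simp [hπ]⟩
    have hJπ : pathJ {s : St | s.val = 0} π = ⊤ := by
      rw [pathJ, sInf_eq_top]
      rintro n ⟨m, rfl, hm, hlen, hG⟩
      simp only [hπ, Set.mem_setOf_eq, hp1] at hG
      exact (one_ne_zero hG).elim
    have htop : (⊤ : ℕ∞) ≤ Jstrong (closedLoop T1 K) {s : St | s.val = 0} p1 := by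
      rw [Jstrong]
      refine le_iSup_of_le a (le_iSup_of_le ⟨p1, hcl⟩
        (le_iSup_of_le π (le_iSup_of_le hstart ?_)))
      rw [hJπ]
    exact (hJ p1 ⟨a, hKa⟩).not_ge htop
  · set z1 : St := ⟨0, Or.inr (Or.inl rfl)⟩ with hz1
    have hTz : T1 z1 false z1 := by simp [T1, hz1]
    have hKz : (fun (s : St) (a : Bool) => s.val ≠ 0 → a = false) z1 false := fun _ => rfl
    have hT0 : ∀ (s : St) (a : Bool), (s.val ≠ 0 → a = false) → T1 s a z1 := by
      intro s a hK
      rcases s.property with hv | hv | hv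
      · have ha' : a = false := hK (by rw [hv]; decide)
        subst ha'; simp [T1, hz1, hv]
      · cases a <;> simp [T1, hz1, hv]
      · have ha' : a = false := hK (by rw [hv]; decide)
        subst ha'; simp [T1, hz1, hv]
    refine ⟨?_, ?_, ?_⟩
    · intro s a hK
      exact ⟨z1, hT0 s a hK⟩
    · intro s _
      exact ⟨false, fun _ => rfl⟩
    · intro s _
      have hle : Jweak (closedLoop T1 (fun s a => s.val ≠ 0 → a = false))
          {s : St | s.val = 0} s ≤ 1 := by
        rw [Jweak]
        refine iSup₂_le fun a ha => ?_
        obtain ⟨s', hT', hK⟩ := ha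
        set π : FullPath (closedLoop T1 (fun s a => s.val ≠ 0 → a = false)) :=
          { len := ⊤,
            st := fun t => if t = 0 then s else z1,
            ac := fun t => if t = 0 then a else false,
            step := by
              intro t _
              cases t with
              | zero => simpa using ⟨hT0 s a hK, hK⟩
              | succ n => simpa using ⟨hTz, hKz⟩,
            maximal := fun t ht => absurd ht (by simp) } with hπ
        refine iInf₂_le_of_le π ⟨by simp [hπ], by simp [hπ], by simp [hπ]⟩ ?_
        apply sInf_le
        refine ⟨1, by simp, one_pos, by simp [hπ], ?_⟩
        simp [hπ, hz1]
        rfl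
      exact lt_of_le_of_lt hle (lt_top_iff_ne_top.mpr (by simp))
end

section
/- Monotonicity of weak distance under adding self loops: let Ŝ1 = (S, A, T1) and Ŝ2 = (S, A, T2) be LTSs with T2 = T1 ∪ B where B is a set of self loops (s,a,s), and let K be a controller valid for both. Then for every state s ∈ Dom(K), J_weak(Ŝ2^(K), G, s) ≤ max(1, J_weak(Ŝ1^(K), G, s)); in particular if J_weak(Ŝ1^(K), G, s) is finite for all s ∈ Dom(K), so is J_weak(Ŝ2^(K), G, s). -/
open scoped Classical


/-- Monotonicity of the weak distance under adding self loops: if `T2` is `T1`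
plus a set `B` of self loops, and `K` is a controller for both, then for every
`s ∈ Dom(K)`, `J_weak(T2^K, G, s) ≤ max 1 (J_weak(T1^K, G, s))`; in particular
finiteness of the weak distances is preserved. -/
theorem Jweak_mono_selfLoops {S A : Type*}
    (T1 : S → A → S → Prop) (B : S → A → Prop) (T2 : S → A → S → Prop)
    (hT2 : ∀ s a s', T2 s a s' ↔ (T1 s a s' ∨ (s' = s ∧ B s a)))
    (K : S → A → Prop)
    (h1 : IsController T1 K) (h2 : IsController T2 K)
    (G : Set S) :
    (∀ s ∈ CtrlDom K,
      Jweak (closedLoop T2 K) G s ≤ max 1 (Jweak (closedLoop T1 K) G s)) ∧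
    ((∀ s ∈ CtrlDom K, Jweak (closedLoop T1 K) G s < ⊤) →
      ∀ s ∈ CtrlDom K, Jweak (closedLoop T2 K) G s < ⊤) := by
  -- transport of fullpaths from the T1 closed loop to the T2 closed loop
  have key : ∀ s, Jweak (closedLoop T2 K) G s ≤ Jweak (closedLoop T1 K) G s := by
    intro s
    apply iSup₂_le
    intro a ha
    obtain ⟨s', hT2', hK⟩ := ha
    obtain ⟨s'', hs''⟩ := h1 s a hK
    have ha1 : ∃ t, closedLoop T1 K s a t := ⟨s'', hs'', hK⟩
    refine le_trans ?_
      (le_iSup₂ (f := fun (a : A) (_ : ∃ t, closedLoop T1 K s a t) =>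
        ⨅ (π : FullPath (closedLoop T1 K)) (_ : PathStarts π s a), pathJ G π) a ha1)
    apply le_iInf₂
    intro π hπ
    -- build the corresponding T2 closed-loop fullpath
    refine le_trans (iInf₂_le
      (⟨π.len, π.st, π.ac,
        fun t ht => ⟨(hT2 _ _ _).mpr (Or.inl (π.step t ht).1), (π.step t ht).2⟩,
        fun t ht b u h => by
          obtain ⟨hT, hKb⟩ := h
          obtain ⟨u', hu'⟩ := h1 _ _ hKb
          exact π.maximal t ht b u' ⟨hu', hKb⟩⟩ : FullPath (closedLoop T2 K))
      ⟨hπ.1, hπ.2.1, hπ.2.2⟩) ?_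
    exact le_of_eq rfl
  constructor
  · intro s _
    exact le_trans (key s) (le_max_right _ _)
  · intro h s hs
    exact lt_of_le_of_lt (key s) (h s hs)
end
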